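/- (Classification of vectors of type (c) in L₄) Let c ∈ ℤ⁴ be nonzero. Then cᵀG₄⁻¹c = 1/5 and the least positive integer k with k·G₄⁻¹c ∈ ℤ⁴ equals 10 if and only if c or −c belongs to the set {(0,1,0,0), (0,0,1,0), (0,0,0,1)}. -/

import Mathlib

open Matrix

/-- The Gram matrix of the even positive definite lattice `L₄` (determinant 500). -/
def G4 : Matrix (Fin 4) (Fin 4) ℚ :=
  !![4, 2, 2, 2; 2, 6, 1, 1; 2, 1, 6, 1; 2, 1, 1, 6]

/-- The explicit inverse of `G4`. -/
def G4i : Matrix (Fin 4) (Fin 4) ℚ :=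
  (1/10 : ℚ) • !![4, -1, -1, -1; -1, 2, 0, 0; -1, 0, 2, 0; -1, 0, 0, 2]

lemma G4_inv : G4⁻¹ = G4i := by
  apply inv_eq_right_inv
  ext i j
  fin_cases i <;> fin_cases j <;>
    norm_num [G4, G4i, Matrix.mul_apply, Fin.sum_univ_four, Matrix.vecHead, Matrix.vecTail,
      Matrix.one_apply, Fin.ext_iff, Matrix.cons_val_two, Matrix.cons_val_three]

lemma eq_vec_iff (c : Fin 4 → ℤ) (a b d e : ℤ) :
    c = ![a, b, d, e] ↔ c 0 = a ∧ c 1 = b ∧ c 2 = d ∧ c 3 = e := by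
  constructor
  · rintro rfl; simp
  · rintro ⟨h0, h1, h2, h3⟩
    funext i; fin_cases i <;> simpa

set_option maxHeartbeats 2000000 in
lemma verify (c : Fin 4 → ℤ)
    (h : c = ![0,1,0,0] ∨ c = ![0,0,1,0] ∨ c = ![0,0,0,1] ∨
         c = ![0,-1,0,0] ∨ c = ![0,0,-1,0] ∨ c = ![0,0,0,-1]) :
    ((fun i => (c i : ℚ)) ⬝ᵥ G4i.mulVec (fun i => (c i : ℚ)) = 1 / 5 ∧
      IsLeast {k : ℕ | 0 < k ∧
        ∀ i, ∃ m : ℤ, (k : ℚ) * G4i.mulVec (fun i => (c i : ℚ)) i = (m : ℚ)} 10) := by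
  rcases h with rfl | rfl | rfl | rfl | rfl | rfl <;>
  refine ⟨by norm_num [G4i, dotProduct, mulVec, Fin.sum_univ_four, Matrix.vecHead,
      Matrix.vecTail, Matrix.cons_val_two, Matrix.cons_val_three], ⟨by norm_num, ?_⟩, ?_⟩ <;>
  first
    | · intro i; fin_cases i <;>
        first
          | (refine ⟨-1, ?_⟩; norm_num [G4i, mulVec, dotProduct, Fin.sum_univ_four,
              Matrix.vecHead, Matrix.vecTail, Matrix.cons_val_two, Matrix.cons_val_three]; done)
          | (refine ⟨1, ?_⟩; norm_num [G4i, mulVec, dotProduct, Fin.sum_univ_four,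
              Matrix.vecHead, Matrix.vecTail, Matrix.cons_val_two, Matrix.cons_val_three]; done)
          | (refine ⟨2, ?_⟩; norm_num [G4i, mulVec, dotProduct, Fin.sum_univ_four,
              Matrix.vecHead, Matrix.vecTail, Matrix.cons_val_two, Matrix.cons_val_three]; done)
          | (refine ⟨-2, ?_⟩; norm_num [G4i, mulVec, dotProduct, Fin.sum_univ_four,
              Matrix.vecHead, Matrix.vecTail, Matrix.cons_val_two, Matrix.cons_val_three]; done)
          | (refine ⟨0, ?_⟩; norm_num [G4i, mulVec, dotProduct, Fin.sum_univ_four,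
              Matrix.vecHead, Matrix.vecTail, Matrix.cons_val_two, Matrix.cons_val_three]; done)
    | · rintro k ⟨hk0, hk⟩
        obtain ⟨m, hm⟩ := hk 0
        norm_num [G4i, mulVec, dotProduct, Fin.sum_univ_four, Matrix.vecHead,
          Matrix.vecTail, Matrix.cons_val_two, Matrix.cons_val_three] at hm
        have h3 : (k:ℤ) = 10*m ∨ (k:ℤ) = -(10*m) := by
          first
            | exact Or.inl (by exact_mod_cast (by push_cast; linarith :
                ((k:ℤ):ℚ) = ((10*m : ℤ):ℚ)))
            | exact Or.inr (by exact_mod_cast (by push_cast; linarith :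
                ((k:ℤ):ℚ) = ((-(10*m) : ℤ):ℚ)))
        omega

/-- Classification of vectors of type (c) in `L₄`: a nonzero `c ∈ ℤ⁴` has norm
`cᵀG₄⁻¹c = 1/5` and order `10` in the discriminant group iff `±c` is one of the three
listed vectors. -/
theorem L4_type_c_classification (c : Fin 4 → ℤ) (hc : c ≠ 0) :
    ((fun i => (c i : ℚ)) ⬝ᵥ G4⁻¹.mulVec (fun i => (c i : ℚ)) = 1 / 5 ∧
      IsLeast {k : ℕ | 0 < k ∧
        ∀ i, ∃ m : ℤ, (k : ℚ) * G4⁻¹.mulVec (fun i => (c i : ℚ)) i = (m : ℚ)} 10) ↔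
    (c = ![0, 1, 0, 0] ∨ c = ![0, 0, 1, 0] ∨ c = ![0, 0, 0, 1] ∨
      -c = ![0, 1, 0, 0] ∨ -c = ![0, 0, 1, 0] ∨ -c = ![0, 0, 0, 1]) := by
  rw [G4_inv]
  constructor
  · rintro ⟨hq, -⟩
    simp only [G4i, dotProduct, mulVec, Fin.sum_univ_four] at hq
    norm_num [Matrix.vecHead, Matrix.vecTail, Matrix.cons_val_two, Matrix.cons_val_three] at hq
    have hZ : 2 * c 0 ^ 2 + c 1 ^ 2 + c 2 ^ 2 + c 3 ^ 2
        - c 0 * c 1 - c 0 * c 2 - c 0 * c 3 = 1 := by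
      have h : ((2 * c 0 ^ 2 + c 1 ^ 2 + c 2 ^ 2 + c 3 ^ 2
          - c 0 * c 1 - c 0 * c 2 - c 0 * c 3 : ℤ) : ℚ) = 1 := by
        push_cast
        linear_combination 5 * hq
      exact_mod_cast h
    have hb0 : 5 * c 0 ^ 2 ≤ 4 := by
      nlinarith [sq_nonneg (2 * c 1 - c 0), sq_nonneg (2 * c 2 - c 0), sq_nonneg (2 * c 3 - c 0)]
    have h0 : c 0 = 0 := by
      have l : -1 ≤ c 0 := by nlinarith [sq_nonneg (c 0 + 1)]
      have r : c 0 ≤ 1 := by nlinarith [sq_nonneg (c 0 - 1)]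
      rcases (by omega : c 0 = -1 ∨ c 0 = 0 ∨ c 0 = 1) with h | h | h <;>
        rw [h] at hb0 <;> omega
    rw [h0] at hZ
    have hZ' : c 1 ^ 2 + c 2 ^ 2 + c 3 ^ 2 = 1 := by linarith [hZ]
    have h1 : c 1 = -1 ∨ c 1 = 0 ∨ c 1 = 1 := by
      have l : -1 ≤ c 1 := by nlinarith [sq_nonneg (c 1 + 1), sq_nonneg (c 2), sq_nonneg (c 3)]
      have r : c 1 ≤ 1 := by nlinarith [sq_nonneg (c 1 - 1), sq_nonneg (c 2), sq_nonneg (c 3)]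
      omega
    have h2 : c 2 = -1 ∨ c 2 = 0 ∨ c 2 = 1 := by
      have l : -1 ≤ c 2 := by nlinarith [sq_nonneg (c 2 + 1), sq_nonneg (c 1), sq_nonneg (c 3)]
      have r : c 2 ≤ 1 := by nlinarith [sq_nonneg (c 2 - 1), sq_nonneg (c 1), sq_nonneg (c 3)]
      omega
    have h3 : c 3 = -1 ∨ c 3 = 0 ∨ c 3 = 1 := by
      have l : -1 ≤ c 3 := by nlinarith [sq_nonneg (c 3 + 1), sq_nonneg (c 1), sq_nonneg (c 2)]
      have r : c 3 ≤ 1 := by nlinarith [sq_nonneg (c 3 - 1), sq_nonneg (c 1), sq_nonneg (c 2)]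
      omega
    simp only [eq_vec_iff, Pi.neg_apply] at *
    rcases h1 with h1 | h1 | h1 <;> rcases h2 with h2 | h2 | h2 <;>
      rcases h3 with h3 | h3 | h3 <;>
      simp_all
  · intro h
    apply verify
    rcases h with h | h | h | h | h | h
    · exact Or.inl h
    · exact Or.inr (Or.inl h)
    · exact Or.inr (Or.inr (Or.inl h))
    · have h' := (eq_vec_iff (-c) 0 1 0 0).mp h
      simp only [Pi.neg_apply] at h'
      exact Or.inr (Or.inr (Or.inr (Or.inl ((eq_vec_iff c 0 (-1) 0 0).mpr (by omega)))))
    · have h' := (eq_vec_iff (-c) 0 0 1 0).mp h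
      simp only [Pi.neg_apply] at h'
      exact Or.inr (Or.inr (Or.inr (Or.inr (Or.inl
        ((eq_vec_iff c 0 0 (-1) 0).mpr (by omega))))))
    · have h' := (eq_vec_iff (-c) 0 0 0 1).mp h
      simp only [Pi.neg_apply] at h'
      exact Or.inr (Or.inr (Or.inr (Or.inr (Or.inr
        ((eq_vec_iff c 0 0 0 (-1)).mpr (by omega))))))
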